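/- arXiv:1807.02236 — 2 statements merged into one kernel-verified Lean document; each statement's English description precedes it below -/
import Mathlib

section
/- Let {x_i^A}, {z_i^A} be orthonormal bases of ℂ^d with overlapping matrix U and coefficients s_1,…,s_d, and let {x_j^B}, {z_j^B} be orthonormal bases of ℂ^{d_B}. Then for every separable density matrix ρ on ℂ^d ⊗ ℂ^{d_B}, every k ∈ {1,…,d}, and all sets I, J of index pairs with |I| + |J| = k + 1, one has Σ_{(i,j)∈I} ⟨x_i^A ⊗ x_j^B, ρ (x_i^A ⊗ x_j^B)⟩ + Σ_{(m,n)∈J} ⟨z_m^A ⊗ z_n^B, ρ (z_m^A ⊗ z_n^B)⟩ ≤ 1 + s_k. -/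
open Matrix
open scoped Kronecker ComplexOrder

set_option maxHeartbeats 1600000

noncomputable section

/-- Sum of the `k` largest entries of `v` (zero-padding implicit for nonneg vectors):
the maximum of `∑ i ∈ s, v i` over subsets `s` of cardinality at most `k`. -/
def topSum {ι : Type*} [Fintype ι] (v : ι → ℝ) (k : ℕ) : ℝ :=
  (Finset.univ.powerset.filter fun s => s.card ≤ k).sup' ⟨∅, by simp⟩ fun s => ∑ i ∈ s, v i

/-- `v ≺ w` (majorization, with implicit zero padding): every partial sum of the `k` largest
entries of `v` is at most that of `w`, and the total sums are equal. -/
def Majorizes {ι κ : Type*} [Fintype ι] [Fintype κ] (v : ι → ℝ) (w : κ → ℝ) : Prop :=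
  (∀ k : ℕ, topSum v k ≤ topSum w k) ∧ (∑ i, v i = ∑ j, w j)

/-- The operator norm (largest singular value) of a complex matrix. -/
def opNorm {m n : Type*} [Fintype m] [Fintype n] [DecidableEq n] (M : Matrix m n ℂ) : ℝ :=
  ‖LinearMap.toContinuousLinearMap (Matrix.toEuclideanLin M)‖

/-- `sCoef U k = s_k`: the maximum operator norm over all submatrices of `U` of class `k`,
i.e. obtained by selecting nonempty row/column sets `R`, `C` with `|R| + |C| = k + 1`. -/
def sCoef {d : ℕ} (U : Matrix (Fin d) (Fin d) ℂ) (k : ℕ) : ℝ :=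
  sSup { r : ℝ | ∃ R C : Finset (Fin d), R.Nonempty ∧ C.Nonempty ∧ R.card + C.card = k + 1 ∧
    r = opNorm (U.submatrix (fun i : {i // i ∈ R} => (i : Fin d))
                            (fun j : {j // j ∈ C} => (j : Fin d))) }

/-- The bound vector `ω^{X⊕Z} = (1, s_1, s_2 - s_1, …, s_d - s_{d-1}, 0, …, 0) ∈ ℝ^{2d}`.
(Note `sCoef U 0 = sSup ∅ = 0`, so the entry at index `1` is `s_1`.) -/
def omegaDS {d : ℕ} (U : Matrix (Fin d) (Fin d) ℂ) : Fin (2 * d) → ℝ := fun i =>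
  if (i : ℕ) = 0 then 1
  else if (i : ℕ) ≤ d then sCoef U (i : ℕ) - sCoef U ((i : ℕ) - 1)
  else 0

/-- A density matrix: positive semidefinite with unit trace. -/
def IsDensityMatrix {n : Type*} [Fintype n] (ρ : Matrix n n ℂ) : Prop :=
  ρ.PosSemidef ∧ ρ.trace = 1

/-- A family of vectors forming an orthonormal basis of `ℂ^d` (w.r.t. `⟨u, v⟩ = star u ⬝ᵥ v`). -/
def OrthonormalBasisVecs {d : ℕ} (x : Fin d → Fin d → ℂ) : Prop :=
  ∀ i j, star (x i) ⬝ᵥ x j = if i = j then 1 else 0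

/-- Measurement distribution of a density matrix `ρ` in the basis `x`: `p i = ⟨x i, ρ (x i)⟩`. -/
def measDist {d : ℕ} (x : Fin d → Fin d → ℂ) (ρ : Matrix (Fin d) (Fin d) ℂ) : Fin d → ℝ :=
  fun i => (star (x i) ⬝ᵥ (ρ *ᵥ x i)).re

/-- The tensor product of vectors. -/
def tensorVec {dA dB : ℕ} (u : Fin dA → ℂ) (v : Fin dB → ℂ) : Fin dA × Fin dB → ℂ :=
  fun ab => u ab.1 * v ab.2

/-- Joint measurement distribution of a bipartite density matrix `ρ` in the product basis
`{xA i ⊗ xB j}`: `p (i,j) = ⟨xA i ⊗ xB j, ρ (xA i ⊗ xB j)⟩`. -/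
def jointDist {dA dB : ℕ} (xA : Fin dA → Fin dA → ℂ) (xB : Fin dB → Fin dB → ℂ)
    (ρ : Matrix (Fin dA × Fin dB) (Fin dA × Fin dB) ℂ) : Fin dA × Fin dB → ℝ :=
  fun ij => (star (tensorVec (xA ij.1) (xB ij.2)) ⬝ᵥ (ρ *ᵥ tensorVec (xA ij.1) (xB ij.2))).re

open scoped Classical in
/-- The finite set of distinct values of the products `α i * β j`. -/
def valueSet {dA dB : ℕ} (α : Fin dA → ℝ) (β : Fin dB → ℝ) : Finset ℝ :=
  Finset.image (fun ij : Fin dA × Fin dB => α ij.1 * β ij.2) Finset.univ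

open scoped Classical in
/-- The grouped distribution of a joint distribution `p`, indexed by the distinct values `l`
of the products `α i * β j`, with entries `∑_{(i,j) : α i * β j = l} p (i,j)`. -/
def groupedDist {dA dB : ℕ} (α : Fin dA → ℝ) (β : Fin dB → ℝ)
    (p : Fin dA × Fin dB → ℝ) : valueSet α β → ℝ :=
  fun l => ∑ ij ∈ Finset.univ.filter (fun ij : Fin dA × Fin dB => α ij.1 * β ij.2 = (l : ℝ)), p ij

/-- Separability: `ρ` is a finite convex combination of tensor products of density matrices. -/
def IsSeparableState {dA dB : ℕ} (ρ : Matrix (Fin dA × Fin dB) (Fin dA × Fin dB) ℂ) : Prop :=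
  ∃ (K : ℕ) (lam : Fin K → ℝ) (σ : Fin K → Matrix (Fin dA) (Fin dA) ℂ)
    (τ : Fin K → Matrix (Fin dB) (Fin dB) ℂ),
    (∀ k, 0 ≤ lam k) ∧ (∑ k, lam k = 1) ∧
    (∀ k, IsDensityMatrix (σ k)) ∧ (∀ k, IsDensityMatrix (τ k)) ∧
    ρ = ∑ k, (lam k : ℂ) • (σ k ⊗ₖ τ k)


namespace SDAux

open Complex

/-- Orthonormal family dual relation: `∑ i, conj (e i a) * e i b = δ_{ab}`. -/
lemma onb_dual {d : ℕ} {e : Fin d → Fin d → ℂ} (he : OrthonormalBasisVecs e) (a b : Fin d) :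
    ∑ i, (starRingEnd ℂ) (e i a) * e i b = if a = b then 1 else 0 := by
  classical
  let X : Matrix (Fin d) (Fin d) ℂ := Matrix.of fun i a => e i a
  have h1 : X * Xᴴ = 1 := by
    ext i j
    have h := he j i
    simp only [dotProduct, Pi.star_apply, RCLike.star_def] at h
    simp only [Matrix.mul_apply, Matrix.conjTranspose_apply, Matrix.of_apply, X,
      Matrix.one_apply, RCLike.star_def]
    rw [show (∑ a, e i a * (starRingEnd ℂ) (e j a)) = ∑ a, (starRingEnd ℂ) (e j a) * e i a from
      Finset.sum_congr rfl fun a _ => mul_comm _ _, h]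
    by_cases hij : i = j <;> simp [hij, eq_comm]
  have h2 : Xᴴ * X = 1 := mul_eq_one_comm.mp h1
  have h3 := congrFun (congrFun h2 a) b
  simpa [Matrix.mul_apply, Matrix.conjTranspose_apply, Matrix.of_apply, X,
    Matrix.one_apply] using h3

/-- Trace formula in an orthonormal basis. -/
lemma onb_trace {d : ℕ} {e : Fin d → Fin d → ℂ} (he : OrthonormalBasisVecs e)
    (M : Matrix (Fin d) (Fin d) ℂ) :
    ∑ i, star (e i) ⬝ᵥ (M *ᵥ e i) = M.trace := by
  classical
  calc ∑ i, star (e i) ⬝ᵥ (M *ᵥ e i)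
      = ∑ i, ∑ a, ∑ b, M a b * ((starRingEnd ℂ) (e i a) * e i b) := by
        refine Finset.sum_congr rfl fun i _ => ?_
        simp only [dotProduct, Matrix.mulVec, Pi.star_apply, RCLike.star_def, Finset.mul_sum]
        exact Finset.sum_congr rfl fun a _ => Finset.sum_congr rfl fun b _ => by ring
    _ = ∑ a, ∑ b, M a b * ∑ i, (starRingEnd ℂ) (e i a) * e i b := by
        rw [Finset.sum_comm]
        refine Finset.sum_congr rfl fun a _ => ?_
        rw [Finset.sum_comm]
        exact Finset.sum_congr rfl fun b _ => (Finset.mul_sum _ _ _).symm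
    _ = ∑ a, M a a := by
        refine Finset.sum_congr rfl fun a _ => ?_
        rw [Finset.sum_eq_single a (fun b _ hb => by rw [onb_dual he]; simp [Ne.symm hb])
          (by simp)]
        rw [onb_dual he]; simp
    _ = M.trace := rfl

lemma measDist_nonneg {d : ℕ} {x : Fin d → Fin d → ℂ} {σ : Matrix (Fin d) (Fin d) ℂ}
    (hσ : σ.PosSemidef) (i : Fin d) : 0 ≤ measDist x σ i := by
  have h := hσ.dotProduct_mulVec_nonneg (x i)
  rw [Complex.le_def] at h
  simpa [measDist] using h.1

lemma measDist_sum_eq_one {d : ℕ} {x : Fin d → Fin d → ℂ} (hx : OrthonormalBasisVecs x)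
    {σ : Matrix (Fin d) (Fin d) ℂ} (hσ : IsDensityMatrix σ) :
    ∑ i, measDist x σ i = 1 := by
  have h := onb_trace hx σ
  rw [hσ.2] at h
  have h2 := congrArg Complex.re h
  rw [Complex.re_sum] at h2
  simpa [measDist] using h2

lemma quad_real {n : Type*} [Fintype n] {σ : Matrix n n ℂ} (hσ : σ.PosSemidef) (u : n → ℂ) :
    star u ⬝ᵥ (σ *ᵥ u) = ((star u ⬝ᵥ (σ *ᵥ u)).re : ℂ) := by
  have h := hσ.dotProduct_mulVec_nonneg u
  rw [Complex.le_def] at h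
  exact (Complex.ext (by simp) (by simpa using h.2.symm))

/-- Quadratic form of a Kronecker product on a tensor vector. -/
lemma dot_kron {dA dB : ℕ} (u : Fin dA → ℂ) (v : Fin dB → ℂ)
    (M : Matrix (Fin dA) (Fin dA) ℂ) (N : Matrix (Fin dB) (Fin dB) ℂ) :
    star (tensorVec u v) ⬝ᵥ ((M ⊗ₖ N) *ᵥ tensorVec u v)
      = (star u ⬝ᵥ (M *ᵥ u)) * (star v ⬝ᵥ (N *ᵥ v)) := by
  classical
  have expand : ((M ⊗ₖ N) *ᵥ tensorVec u v) = fun ab => (M *ᵥ u) ab.1 * (N *ᵥ v) ab.2 := by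
    funext ab
    simp only [Matrix.mulVec, dotProduct, Fintype.sum_prod_type, Matrix.kroneckerMap_apply,
      tensorVec]
    rw [Finset.sum_mul_sum]
    exact Finset.sum_congr rfl fun c _ => Finset.sum_congr rfl fun e _ => by ring
  rw [expand]
  simp only [dotProduct, Fintype.sum_prod_type, Pi.star_apply, tensorVec, RCLike.star_def,
    _root_.map_mul]
  rw [Finset.sum_mul_sum]
  exact Finset.sum_congr rfl fun a _ => Finset.sum_congr rfl fun b _ => by ring

/-- The core geometric inequality, per vector. -/
lemma core {d : ℕ} {x z : Fin d → Fin d → ℂ} (hx : OrthonormalBasisVecs x)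
    (hz : OrthonormalBasisVecs z) {U : Matrix (Fin d) (Fin d) ℂ}
    (hU : ∀ i j, U i j = star (x i) ⬝ᵥ z j) (R C : Finset (Fin d)) (w : Fin d → ℂ) :
    ∑ i ∈ R, ‖star w ⬝ᵥ x i‖ ^ 2 + ∑ m ∈ C, ‖star w ⬝ᵥ z m‖ ^ 2
      ≤ (1 + opNorm (U.submatrix (fun i : {i // i ∈ R} => (i : Fin d))
          (fun j : {j // j ∈ C} => (j : Fin d)))) * ∑ a, ‖w a‖ ^ 2 := by
  classical
  set M : Matrix {i // i ∈ R} {j // j ∈ C} ℂ :=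
    U.submatrix (fun i : {i // i ∈ R} => (i : Fin d)) (fun j : {j // j ∈ C} => (j : Fin d))
      with hM
  set s : ℝ := opNorm M with hs
  have hs0 : 0 ≤ s := norm_nonneg _
  let toE : (Fin d → ℂ) → EuclideanSpace ℂ (Fin d) := (WithLp.equiv 2 (Fin d → ℂ)).symm
  have hinner : ∀ (u v : Fin d → ℂ), (inner ℂ (toE u) (toE v) : ℂ) = star u ⬝ᵥ v := by
    intro u v
    rw [EuclideanSpace.inner_eq_star_dotProduct, dotProduct_comm]
    simp [toE]
  set φ : EuclideanSpace ℂ (Fin d) := toE w with hφ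
  set xE : Fin d → EuclideanSpace ℂ (Fin d) := fun i => toE (x i) with hxE
  set zE : Fin d → EuclideanSpace ℂ (Fin d) := fun m => toE (z m) with hzE
  have hOx : Orthonormal ℂ xE := orthonormal_iff_ite.mpr fun i j => by
    rw [hxE, hinner]; exact hx i j
  have hOz : Orthonormal ℂ zE := orthonormal_iff_ite.mpr fun i j => by
    rw [hzE, hinner]; exact hz i j
  set α : Fin d → ℂ := fun i => (inner ℂ φ (xE i) : ℂ) with hα
  set β : Fin d → ℂ := fun m => (inner ℂ φ (zE m) : ℂ) with hβ
  set A : ℝ := ∑ i ∈ R, ‖α i‖ ^ 2 with hA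
  set B : ℝ := ∑ m ∈ C, ‖β m‖ ^ 2 with hB
  have hA0 : 0 ≤ A := Finset.sum_nonneg fun _ _ => sq_nonneg _
  have hB0 : 0 ≤ B := Finset.sum_nonneg fun _ _ => sq_nonneg _
  set a : EuclideanSpace ℂ (Fin d) := ∑ i ∈ R, (starRingEnd ℂ) (α i) • xE i with ha
  set b : EuclideanSpace ℂ (Fin d) := ∑ m ∈ C, (starRingEnd ℂ) (β m) • zE m with hb
  have conj_mul_self : ∀ c : ℂ, c * (starRingEnd ℂ) c = ((‖c‖ ^ 2 : ℝ) : ℂ) := fun c => by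
    rw [Complex.mul_conj, Complex.normSq_eq_norm_sq]
  have hφa : (inner ℂ φ a : ℂ) = (A : ℂ) := by
    rw [ha, inner_sum, hA, Complex.ofReal_sum]
    refine Finset.sum_congr rfl fun i _ => ?_
    rw [inner_smul_right, mul_comm, conj_mul_self]
  have hφb : (inner ℂ φ b : ℂ) = (B : ℂ) := by
    rw [hb, inner_sum, hB, Complex.ofReal_sum]
    refine Finset.sum_congr rfl fun m _ => ?_
    rw [inner_smul_right, mul_comm, conj_mul_self]
  have hna : ‖a‖ ^ 2 = A := by
    have h2 : (inner ℂ a a : ℂ) = (A : ℂ) := by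
      rw [ha, hOx.inner_sum, hA, Complex.ofReal_sum]
      refine Finset.sum_congr rfl fun i _ => ?_
      rw [Complex.conj_conj, conj_mul_self]
    have h3 := @inner_self_eq_norm_sq ℂ _ _ _ _ a
    rw [h2] at h3
    simpa using h3.symm
  have hnb : ‖b‖ ^ 2 = B := by
    have h2 : (inner ℂ b b : ℂ) = (B : ℂ) := by
      rw [hb, hOz.inner_sum, hB, Complex.ofReal_sum]
      refine Finset.sum_congr rfl fun m _ => ?_
      rw [Complex.conj_conj, conj_mul_self]
    have h3 := @inner_self_eq_norm_sq ℂ _ _ _ _ b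
    rw [h2] at h3
    simpa using h3.symm
  -- the cross term
  set p : EuclideanSpace ℂ {i // i ∈ R} :=
    (WithLp.equiv 2 ({i // i ∈ R} → ℂ)).symm (fun i => (starRingEnd ℂ) (α i)) with hp
  set q : EuclideanSpace ℂ {j // j ∈ C} :=
    (WithLp.equiv 2 ({j // j ∈ C} → ℂ)).symm (fun m => (starRingEnd ℂ) (β m)) with hq
  set T := LinearMap.toContinuousLinearMap (Matrix.toEuclideanLin M) with hT
  have hab : (inner ℂ a b : ℂ) = (inner ℂ p (T q) : ℂ) := by
    have h1 : (inner ℂ a b : ℂ)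
        = ∑ i ∈ R, ∑ m ∈ C, α i * ((starRingEnd ℂ) (β m) * U i m) := by
      rw [ha, sum_inner]
      refine Finset.sum_congr rfl fun i _ => ?_
      rw [inner_smul_left, Complex.conj_conj, hb, inner_sum, Finset.mul_sum]
      refine Finset.sum_congr rfl fun m _ => ?_
      have : (inner ℂ (xE i) (zE m) : ℂ) = U i m := by rw [hxE, hzE, hinner, hU]
      rw [inner_smul_right, this]
    have h2 : (inner ℂ p (T q) : ℂ)
        = ∑ i ∈ R, ∑ m ∈ C, α i * ((starRingEnd ℂ) (β m) * U i m) := by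
      rw [hT, LinearMap.coe_toContinuousLinearMap', Matrix.toEuclideanLin_apply,
        EuclideanSpace.inner_eq_star_dotProduct]
      simp only [WithLp.equiv_symm_apply, PiLp.toLp_apply, WithLp.equiv_apply, hp, hq]
      rw [← Finset.sum_coe_sort R
        (fun i => ∑ m ∈ C, α i * ((starRingEnd ℂ) (β m) * U i m))]
      simp only [dotProduct, Matrix.mulVec, Pi.star_apply, RCLike.star_def,
        WithLp.equiv_symm_apply, PiLp.toLp_apply, WithLp.equiv_apply, Complex.conj_conj]
      refine Finset.sum_congr rfl fun i _ => ?_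
      rw [← Finset.sum_coe_sort C (fun m => α i * ((starRingEnd ℂ) (β m) * U i m)),
        Finset.sum_mul]
      refine Finset.sum_congr rfl fun m _ => ?_
      simp only [hM, Matrix.submatrix_apply, dotProduct]
      ring
    rw [h1, h2]
  have hnp : ‖p‖ = Real.sqrt A := by
    rw [EuclideanSpace.norm_eq]
    congr 1
    rw [hA, ← Finset.sum_coe_sort R (fun i => ‖α i‖ ^ 2)]
    refine Finset.sum_congr rfl fun i _ => ?_
    simp [hp, WithLp.equiv_symm_apply, PiLp.toLp_apply]
  have hnq : ‖q‖ = Real.sqrt B := by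
    rw [EuclideanSpace.norm_eq]
    congr 1
    rw [hB, ← Finset.sum_coe_sort C (fun m => ‖β m‖ ^ 2)]
    refine Finset.sum_congr rfl fun m _ => ?_
    simp [hq, WithLp.equiv_symm_apply, PiLp.toLp_apply]
  have hcross : ‖(inner ℂ a b : ℂ)‖ ≤ Real.sqrt A * (s * Real.sqrt B) := by
    rw [hab]
    calc ‖(inner ℂ p (T q) : ℂ)‖ ≤ ‖p‖ * ‖T q‖ := norm_inner_le_norm _ _
      _ ≤ ‖p‖ * (‖T‖ * ‖q‖) :=
        mul_le_mul_of_nonneg_left (T.le_opNorm q) (norm_nonneg _)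
      _ = Real.sqrt A * (s * Real.sqrt B) := by rw [hnp, hnq, hs, opNorm, hT]
  have hre_cross : 2 * (inner ℂ a b : ℂ).re ≤ s * (A + B) := by
    have h1 : (inner ℂ a b : ℂ).re ≤ ‖(inner ℂ a b : ℂ)‖ := by
      exact Complex.re_le_norm _
    have h2 : 2 * (Real.sqrt A * Real.sqrt B) ≤ A + B := by
      nlinarith [two_mul_le_add_sq (Real.sqrt A) (Real.sqrt B), Real.sq_sqrt hA0,
        Real.sq_sqrt hB0]
    have h3 : s * (2 * (Real.sqrt A * Real.sqrt B)) ≤ s * (A + B) :=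
      mul_le_mul_of_nonneg_left h2 hs0
    nlinarith [h1.trans hcross]
  have hsum_ab : ‖a + b‖ ^ 2 ≤ (1 + s) * (A + B) := by
    have h := @norm_add_sq ℂ _ _ _ _ a b
    rw [hna, hnb] at h
    have : RCLike.re (inner ℂ a b : ℂ) = (inner ℂ a b : ℂ).re := rfl
    rw [this] at h
    nlinarith [hre_cross]
  have hφab : A + B ≤ ‖φ‖ * ‖a + b‖ := by
    have h1 : (inner ℂ φ (a + b) : ℂ) = ((A + B : ℝ) : ℂ) := by
      rw [inner_add_right, hφa, hφb, Complex.ofReal_add]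
    have h2 : (A + B : ℝ) ≤ ‖(inner ℂ φ (a + b) : ℂ)‖ := by
      rw [h1, Complex.norm_real, Real.norm_eq_abs]
      exact le_abs_self _
    exact h2.trans (norm_inner_le_norm _ _)
  have hφn : ‖φ‖ ^ 2 = ∑ a, ‖w a‖ ^ 2 := by
    rw [EuclideanSpace.norm_eq, Real.sq_sqrt (Finset.sum_nonneg fun _ _ => sq_nonneg _)]
    refine Finset.sum_congr rfl fun i _ => ?_
    simp [hφ, toE, WithLp.equiv_symm_apply, PiLp.toLp_apply]
  have hgoal : A + B ≤ (1 + s) * ∑ a, ‖w a‖ ^ 2 := by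
    rcases eq_or_lt_of_le (add_nonneg hA0 hB0) with h0 | h0
    · rw [← h0]
      positivity
    · have h1 : (A + B) * (A + B) ≤ (‖φ‖ * ‖a + b‖) * (‖φ‖ * ‖a + b‖) :=
        mul_self_le_mul_self (le_of_lt h0) hφab
      have h2 : (‖φ‖ * ‖a + b‖) * (‖φ‖ * ‖a + b‖) = ‖φ‖ ^ 2 * ‖a + b‖ ^ 2 := by ring
      have h3 : ‖φ‖ ^ 2 * ‖a + b‖ ^ 2 ≤ ‖φ‖ ^ 2 * ((1 + s) * (A + B)) :=
        mul_le_mul_of_nonneg_left hsum_ab (sq_nonneg _)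
      have h4 : (A + B) * (A + B) ≤ ((1 + s) * ‖φ‖ ^ 2) * (A + B) := by nlinarith
      have h5 := le_of_mul_le_mul_right (by linarith [h4] : (A + B) * (A + B) ≤ ((1 + s) * ‖φ‖ ^ 2) * (A + B)) h0
      rw [hφn] at h5
      linarith
  have hαid : ∀ i, star w ⬝ᵥ x i = α i := fun i => (hinner w (x i)).symm
  have hβid : ∀ m, star w ⬝ᵥ z m = β m := fun m => (hinner w (z m)).symm
  calc ∑ i ∈ R, ‖star w ⬝ᵥ x i‖ ^ 2 + ∑ m ∈ C, ‖star w ⬝ᵥ z m‖ ^ 2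
      = A + B := by
        rw [hA, hB]
        congr 1 <;> exact Finset.sum_congr rfl fun i _ => by simp only [hαid, hβid]
    _ ≤ (1 + s) * ∑ a, ‖w a‖ ^ 2 := hgoal

/-- The key inequality for a single density matrix on system A. -/
lemma key {d : ℕ} {x z : Fin d → Fin d → ℂ} (hx : OrthonormalBasisVecs x)
    (hz : OrthonormalBasisVecs z) {U : Matrix (Fin d) (Fin d) ℂ}
    (hU : ∀ i j, U i j = star (x i) ⬝ᵥ z j) {σ : Matrix (Fin d) (Fin d) ℂ}
    (hσ : IsDensityMatrix σ) (R C : Finset (Fin d)) :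
    ∑ i ∈ R, measDist x σ i + ∑ m ∈ C, measDist z σ m
      ≤ 1 + opNorm (U.submatrix (fun i : {i // i ∈ R} => (i : Fin d))
          (fun j : {j // j ∈ C} => (j : Fin d))) := by
  classical
  obtain ⟨Bm, hBm⟩ : ∃ B : Matrix (Fin d) (Fin d) ℂ, σ = Bᴴ * B := by
    open scoped MatrixOrder Matrix.Norms.L2Operator in
    exact CStarAlgebra.nonneg_iff_eq_star_mul_self.mp hσ.1.nonneg
  set s : ℝ := opNorm (U.submatrix (fun i : {i // i ∈ R} => (i : Fin d))
      (fun j : {j // j ∈ C} => (j : Fin d))) with hs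
  have hs0 : 0 ≤ s := norm_nonneg _
  -- rows of Bm, conjugated
  set wv : Fin d → Fin d → ℂ := fun r a => (starRingEnd ℂ) (Bm r a) with hwv
  have hstarw : ∀ r, star (wv r) = fun a => Bm r a := by
    intro r; funext a; simp [hwv]
  have hmeas : ∀ (e : Fin d → ℂ),
      (star e ⬝ᵥ (σ *ᵥ e)).re = ∑ r, ‖star (wv r) ⬝ᵥ e‖ ^ 2 := by
    intro e
    have h1 : star e ⬝ᵥ (σ *ᵥ e) = star (Bm *ᵥ e) ⬝ᵥ (Bm *ᵥ e) := by
      rw [hBm, ← Matrix.mulVec_mulVec, Matrix.dotProduct_mulVec, ← Matrix.star_mulVec]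
    have h2 : ∀ r, (Bm *ᵥ e) r = star (wv r) ⬝ᵥ e := by
      intro r; rw [hstarw]; rfl
    rw [h1]
    have h3 : star (Bm *ᵥ e) ⬝ᵥ (Bm *ᵥ e)
        = ∑ r, (starRingEnd ℂ) ((Bm *ᵥ e) r) * (Bm *ᵥ e) r := rfl
    rw [h3, Complex.re_sum]
    refine Finset.sum_congr rfl fun r _ => ?_
    rw [mul_comm, Complex.mul_conj, Complex.normSq_eq_norm_sq, Complex.ofReal_re, h2]
  have htr : ∑ r, ∑ a, ‖wv r a‖ ^ 2 = 1 := by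
    have h1 : σ.trace = 1 := hσ.2
    have h2 : σ.trace = ∑ a, ∑ r, (starRingEnd ℂ) (Bm r a) * Bm r a := by
      rw [hBm]
      simp [Matrix.trace, Matrix.diag, Matrix.mul_apply, Matrix.conjTranspose_apply]
    rw [h2] at h1
    have h3 := congrArg Complex.re h1
    rw [Complex.re_sum] at h3
    rw [Finset.sum_comm]
    have h4 : ∀ a, (∑ r, (starRingEnd ℂ) (Bm r a) * Bm r a).re = ∑ r, ‖wv r a‖ ^ 2 := by
      intro a
      rw [Complex.re_sum]
      refine Finset.sum_congr rfl fun r _ => ?_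
      rw [mul_comm, Complex.mul_conj, Complex.normSq_eq_norm_sq, Complex.ofReal_re]
      simp [hwv]
    calc ∑ a, ∑ r, ‖wv r a‖ ^ 2 = ∑ a, (∑ r, (starRingEnd ℂ) (Bm r a) * Bm r a).re := by
          exact Finset.sum_congr rfl fun a _ => (h4 a).symm
      _ = 1 := by simpa using h3
  calc ∑ i ∈ R, measDist x σ i + ∑ m ∈ C, measDist z σ m
      = ∑ r, (∑ i ∈ R, ‖star (wv r) ⬝ᵥ x i‖ ^ 2 + ∑ m ∈ C, ‖star (wv r) ⬝ᵥ z m‖ ^ 2) := by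
        rw [Finset.sum_add_distrib]
        congr 1
        · rw [Finset.sum_comm]
          exact Finset.sum_congr rfl fun i _ => hmeas (x i)
        · rw [Finset.sum_comm]
          exact Finset.sum_congr rfl fun m _ => hmeas (z m)
    _ ≤ ∑ r, (1 + s) * ∑ a, ‖wv r a‖ ^ 2 :=
        Finset.sum_le_sum fun r _ => core hx hz hU R C (wv r)
    _ = (1 + s) * ∑ r, ∑ a, ‖wv r a‖ ^ 2 := by rw [Finset.mul_sum]
    _ = 1 + s := by rw [htr, mul_one]

/-- The per-product-state bound. -/
lemma per_state {d dB : ℕ} {xA zA : Fin d → Fin d → ℂ} {xB zB : Fin dB → Fin dB → ℂ}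
    (hxA : OrthonormalBasisVecs xA) (hzA : OrthonormalBasisVecs zA)
    (hxB : OrthonormalBasisVecs xB) (hzB : OrthonormalBasisVecs zB)
    {U : Matrix (Fin d) (Fin d) ℂ} (hU : ∀ i j, U i j = star (xA i) ⬝ᵥ zA j)
    {σ : Matrix (Fin d) (Fin d) ℂ} (hσ : IsDensityMatrix σ)
    {τ : Matrix (Fin dB) (Fin dB) ℂ} (hτ : IsDensityMatrix τ)
    (k : ℕ) (hk1 : 1 ≤ k) (hkd : k ≤ d)
    (hs0 : 0 ≤ sCoef U k)
    (hle : ∀ R C : Finset (Fin d), R.Nonempty → C.Nonempty → R.card + C.card = k + 1 →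
      opNorm (U.submatrix (fun i : {i // i ∈ R} => (i : Fin d))
        (fun j : {j // j ∈ C} => (j : Fin d))) ≤ sCoef U k)
    (I J : Finset (Fin d × Fin dB)) (hIJ : I.card + J.card = k + 1) :
    ∑ ij ∈ I, measDist xA σ ij.1 * measDist xB τ ij.2
      + ∑ mn ∈ J, measDist zA σ mn.1 * measDist zB τ mn.2 ≤ 1 + sCoef U k := by
  classical
  have haA : ∀ i, 0 ≤ measDist xA σ i := measDist_nonneg hσ.1
  have hcA : ∀ i, 0 ≤ measDist zA σ i := measDist_nonneg hσ.1
  have hbB : ∀ j, 0 ≤ measDist xB τ j := measDist_nonneg hτ.1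
  have hdB : ∀ j, 0 ≤ measDist zB τ j := measDist_nonneg hτ.1
  have hsumxB : ∑ j, measDist xB τ j = 1 := measDist_sum_eq_one hxB hτ
  have hsumzB : ∑ j, measDist zB τ j = 1 := measDist_sum_eq_one hzB hτ
  have hsumxA : ∑ i, measDist xA σ i = 1 := measDist_sum_eq_one hxA hσ
  have hsumzA : ∑ i, measDist zA σ i = 1 := measDist_sum_eq_one hzA hσ
  -- bound each double sum by a marginal sum over the projection
  have hIbound : ∑ ij ∈ I, measDist xA σ ij.1 * measDist xB τ ij.2
      ≤ ∑ i ∈ I.image Prod.fst, measDist xA σ i := by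
    calc ∑ ij ∈ I, measDist xA σ ij.1 * measDist xB τ ij.2
        ≤ ∑ ij ∈ (I.image Prod.fst) ×ˢ Finset.univ,
            measDist xA σ ij.1 * measDist xB τ ij.2 := by
          refine Finset.sum_le_sum_of_subset_of_nonneg ?_ fun ij _ _ =>
            mul_nonneg (haA _) (hbB _)
          intro ij hij
          exact Finset.mem_product.mpr ⟨Finset.mem_image_of_mem _ hij, Finset.mem_univ _⟩
      _ = ∑ i ∈ I.image Prod.fst, measDist xA σ i := by
          rw [Finset.sum_product]
          refine Finset.sum_congr rfl fun i _ => ?_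
          dsimp only
          rw [← Finset.mul_sum, hsumxB, mul_one]
  have hJbound : ∑ mn ∈ J, measDist zA σ mn.1 * measDist zB τ mn.2
      ≤ ∑ m ∈ J.image Prod.fst, measDist zA σ m := by
    calc ∑ mn ∈ J, measDist zA σ mn.1 * measDist zB τ mn.2
        ≤ ∑ mn ∈ (J.image Prod.fst) ×ˢ Finset.univ,
            measDist zA σ mn.1 * measDist zB τ mn.2 := by
          refine Finset.sum_le_sum_of_subset_of_nonneg ?_ fun mn _ _ =>
            mul_nonneg (hcA _) (hdB _)
          intro mn hmn
          exact Finset.mem_product.mpr ⟨Finset.mem_image_of_mem _ hmn, Finset.mem_univ _⟩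
      _ = ∑ m ∈ J.image Prod.fst, measDist zA σ m := by
          rw [Finset.sum_product]
          refine Finset.sum_congr rfl fun m _ => ?_
          dsimp only
          rw [← Finset.mul_sum, hsumzB, mul_one]
  by_cases hI : I = ∅
  · -- first sum vanishes; second ≤ 1
    subst hI
    simp only [Finset.sum_empty, zero_add]
    calc ∑ mn ∈ J, measDist zA σ mn.1 * measDist zB τ mn.2
        ≤ ∑ m ∈ J.image Prod.fst, measDist zA σ m := hJbound
      _ ≤ ∑ m, measDist zA σ m :=
          Finset.sum_le_sum_of_subset_of_nonneg (Finset.subset_univ _) fun m _ _ => hcA m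
      _ = 1 := hsumzA
      _ ≤ 1 + sCoef U k := by linarith
  by_cases hJ : J = ∅
  · subst hJ
    simp only [Finset.sum_empty, add_zero]
    calc ∑ ij ∈ I, measDist xA σ ij.1 * measDist xB τ ij.2
        ≤ ∑ i ∈ I.image Prod.fst, measDist xA σ i := hIbound
      _ ≤ ∑ i, measDist xA σ i :=
          Finset.sum_le_sum_of_subset_of_nonneg (Finset.subset_univ _) fun i _ _ => haA i
      _ = 1 := hsumxA
      _ ≤ 1 + sCoef U k := by linarith
  -- main case
  set R : Finset (Fin d) := I.image Prod.fst with hR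
  set C : Finset (Fin d) := J.image Prod.fst with hC
  have hRne : R.Nonempty := (Finset.image_nonempty).mpr (Finset.nonempty_of_ne_empty hI)
  have hCne : C.Nonempty := (Finset.image_nonempty).mpr (Finset.nonempty_of_ne_empty hJ)
  have hRcard : R.card ≤ I.card := Finset.card_image_le
  have hCcard : C.card ≤ J.card := Finset.card_image_le
  have hIne : I.Nonempty := Finset.nonempty_of_ne_empty hI
  have hIcard : 1 ≤ I.card := Finset.card_pos.mpr hIne
  have hCk : C.card ≤ k := by omega
  have hCk1 : 1 ≤ C.card := Finset.card_pos.mpr hCne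
  have hRk : R.card ≤ k + 1 - C.card := by omega
  obtain ⟨R', hRR', hR'card⟩ := Finset.exists_superset_card_eq hRk (by
    simpa using (by omega : k + 1 - C.card ≤ d))
  have hR'ne : R'.Nonempty := Finset.card_pos.mp (by omega)
  have hcards : R'.card + C.card = k + 1 := by omega
  calc ∑ ij ∈ I, measDist xA σ ij.1 * measDist xB τ ij.2
        + ∑ mn ∈ J, measDist zA σ mn.1 * measDist zB τ mn.2
      ≤ ∑ i ∈ R, measDist xA σ i + ∑ m ∈ C, measDist zA σ m := add_le_add hIbound hJbound
    _ ≤ ∑ i ∈ R', measDist xA σ i + ∑ m ∈ C, measDist zA σ m := by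
        have := Finset.sum_le_sum_of_subset_of_nonneg hRR' fun i _ _ => haA i
        linarith
    _ ≤ 1 + opNorm (U.submatrix (fun i : {i // i ∈ R'} => (i : Fin d))
          (fun j : {j // j ∈ C} => (j : Fin d))) := key hxA hzA hU hσ R' C
    _ ≤ 1 + sCoef U k := by
        have := hle R' C hR'ne hCne hcards
        linarith

end SDAux

/-- the scalar entanglement criteria. For every separable density matrix `ρ`, every
`k ∈ {1,…,d}` and all sets `I`, `J` of index pairs with `|I| + |J| = k + 1`, the joint
measurement probabilities satisfy `∑_{(i,j)∈I} p(i,j) + ∑_{(m,n)∈J} q(m,n) ≤ 1 + s_k`. -/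
theorem separable_scalar_detection {d dB : ℕ}
    (xA zA : Fin d → Fin d → ℂ) (xB zB : Fin dB → Fin dB → ℂ)
    (hxA : OrthonormalBasisVecs xA) (hzA : OrthonormalBasisVecs zA)
    (hxB : OrthonormalBasisVecs xB) (hzB : OrthonormalBasisVecs zB)
    (U : Matrix (Fin d) (Fin d) ℂ) (hU : ∀ i j, U i j = star (xA i) ⬝ᵥ zA j)
    (ρ : Matrix (Fin d × Fin dB) (Fin d × Fin dB) ℂ)
    (hρ : IsDensityMatrix ρ) (hsep : IsSeparableState ρ)
    (k : ℕ) (hk1 : 1 ≤ k) (hkd : k ≤ d)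
    (I J : Finset (Fin d × Fin dB)) (hIJ : I.card + J.card = k + 1) :
    ∑ ij ∈ I, jointDist xA xB ρ ij + ∑ mn ∈ J, jointDist zA zB ρ mn ≤ 1 + sCoef U k := by
  classical
  -- the set defining sCoef is finite, hence bddAbove
  have hBdd : BddAbove { r : ℝ | ∃ R C : Finset (Fin d), R.Nonempty ∧ C.Nonempty ∧
      R.card + C.card = k + 1 ∧
      r = opNorm (U.submatrix (fun i : {i // i ∈ R} => (i : Fin d))
                              (fun j : {j // j ∈ C} => (j : Fin d))) } := by
    apply Set.Finite.bddAbove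
    apply Set.Finite.subset (Set.finite_range fun RC : Finset (Fin d) × Finset (Fin d) =>
      opNorm (U.submatrix (fun i : {i // i ∈ RC.1} => (i : Fin d))
                          (fun j : {j // j ∈ RC.2} => (j : Fin d))))
    rintro r ⟨R, C, -, -, -, rfl⟩
    exact ⟨(R, C), rfl⟩
  have hle : ∀ R C : Finset (Fin d), R.Nonempty → C.Nonempty → R.card + C.card = k + 1 →
      opNorm (U.submatrix (fun i : {i // i ∈ R} => (i : Fin d))
        (fun j : {j // j ∈ C} => (j : Fin d))) ≤ sCoef U k := by
    intro R C hR hC hcard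
    exact le_csSup hBdd ⟨R, C, hR, hC, hcard, rfl⟩
  have hs0 : 0 ≤ sCoef U k := by
    obtain ⟨R, -, hRcard⟩ := Finset.exists_superset_card_eq
      (s := (∅ : Finset (Fin d))) (n := k) (by simp) (by simpa using hkd)
    obtain ⟨C, -, hCcard⟩ := Finset.exists_superset_card_eq
      (s := (∅ : Finset (Fin d))) (n := 1) (by simp) (by simpa using hk1.trans hkd)
    have hR : R.Nonempty := Finset.card_pos.mp (by omega)
    have hC : C.Nonempty := Finset.card_pos.mp (by omega)
    exact le_trans (norm_nonneg _) (hle R C hR hC (by omega))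
  obtain ⟨K, lam, σ, τ, hlam0, hlam1, hσ, hτ, hρeq⟩ := hsep
  have hdecomp : ∀ (x' : Fin d → Fin d → ℂ) (y' : Fin dB → Fin dB → ℂ) (ij : Fin d × Fin dB),
      jointDist x' y' ρ ij
        = ∑ t, lam t * (measDist x' (σ t) ij.1 * measDist y' (τ t) ij.2) := by
    intro x' y' ij
    set w : Fin d × Fin dB → ℂ := tensorVec (x' ij.1) (y' ij.2) with hw
    have hmv : ∀ a, ((∑ t, (lam t : ℂ) • (σ t ⊗ₖ τ t)) *ᵥ w) a
        = ∑ t, (lam t : ℂ) * (((σ t ⊗ₖ τ t) *ᵥ w) a) := by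
      intro a
      simp only [Matrix.mulVec, dotProduct, Matrix.sum_apply, Matrix.smul_apply, smul_eq_mul,
        Finset.sum_mul, Finset.mul_sum]
      rw [Finset.sum_comm]
      exact Finset.sum_congr rfl fun t _ => Finset.sum_congr rfl fun b _ => by ring
    rw [jointDist, hρeq, ← hw]
    calc (star w ⬝ᵥ ((∑ t, (lam t : ℂ) • (σ t ⊗ₖ τ t)) *ᵥ w)).re
        = (∑ t, (lam t : ℂ) * (star w ⬝ᵥ ((σ t ⊗ₖ τ t) *ᵥ w))).re := by
          congr 1
          rw [show ((∑ t, (lam t : ℂ) • (σ t ⊗ₖ τ t)) *ᵥ w)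
              = fun a => ∑ t, (lam t : ℂ) * (((σ t ⊗ₖ τ t) *ᵥ w) a) from funext hmv]
          simp only [dotProduct, Finset.mul_sum]
          rw [Finset.sum_comm]
          exact Finset.sum_congr rfl fun t _ => Finset.sum_congr rfl fun a _ => by ring
      _ = ∑ t, lam t * (measDist x' (σ t) ij.1 * measDist y' (τ t) ij.2) := by
          rw [Complex.re_sum]
          refine Finset.sum_congr rfl fun t _ => ?_
          rw [hw, SDAux.dot_kron, SDAux.quad_real (hσ t).1, SDAux.quad_real (hτ t).1,
            ← Complex.ofReal_mul]
          rw [Complex.re_ofReal_mul]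
          rfl
  have h1 : ∑ ij ∈ I, jointDist xA xB ρ ij
      = ∑ t, lam t * ∑ ij ∈ I, measDist xA (σ t) ij.1 * measDist xB (τ t) ij.2 := by
    rw [Finset.sum_congr rfl fun ij _ => hdecomp xA xB ij, Finset.sum_comm]
    exact Finset.sum_congr rfl fun t _ => (Finset.mul_sum _ _ _).symm
  have h2 : ∑ mn ∈ J, jointDist zA zB ρ mn
      = ∑ t, lam t * ∑ mn ∈ J, measDist zA (σ t) mn.1 * measDist zB (τ t) mn.2 := by
    rw [Finset.sum_congr rfl fun mn _ => hdecomp zA zB mn, Finset.sum_comm]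
    exact Finset.sum_congr rfl fun t _ => (Finset.mul_sum _ _ _).symm
  rw [h1, h2, ← Finset.sum_add_distrib]
  calc ∑ t, (lam t * ∑ ij ∈ I, measDist xA (σ t) ij.1 * measDist xB (τ t) ij.2
        + lam t * ∑ mn ∈ J, measDist zA (σ t) mn.1 * measDist zB (τ t) mn.2)
      = ∑ t, lam t * (∑ ij ∈ I, measDist xA (σ t) ij.1 * measDist xB (τ t) ij.2
        + ∑ mn ∈ J, measDist zA (σ t) mn.1 * measDist zB (τ t) mn.2) := by
        exact Finset.sum_congr rfl fun t _ => (mul_add _ _ _).symm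
    _ ≤ ∑ t, lam t * (1 + sCoef U k) := Finset.sum_le_sum fun t _ =>
        mul_le_mul_of_nonneg_left
          (SDAux.per_state hxA hzA hxB hzB hU (hσ t) (hτ t) k hk1 hkd hs0 hle I J hIJ)
          (hlam0 t)
    _ = 1 + sCoef U k := by rw [← Finset.sum_mul, hlam1, one_mul]

end
end

section
/- Let p^(1),…,p^(N) ∈ ℝ^d be vectors with nonnegative entries all having the same total sum, let Ω_0 = 0, Ω_k = max over n of the sum of the k largest entries of p^(n) for k = 1,…,d, and let ω^sup ∈ ℝ^d have entries ω^sup_k = Ω_k − Ω_{k−1}. If the entries of ω^sup are in descending order (ω^sup_1 ≥ ω^sup_2 ≥ … ≥ ω^sup_d), then for every vector r with nonnegative entries that majorizes each p^(n), the vector ω^sup is majorized by r; that is, ω^sup is the least upper bound of {p^(1),…,p^(N)} in the majorization order. -/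
open Matrix
open scoped Kronecker ComplexOrder

noncomputable section

private lemma topSum_mono' {ι : Type*} [Fintype ι] (v : ι → ℝ) {k k' : ℕ} (h : k ≤ k') :
    topSum v k ≤ topSum v k' := by
  apply Finset.sup'_le
  intro s hs
  refine Finset.le_sup' (f := fun t => ∑ i ∈ t, v i) ?_
  simp only [Finset.mem_filter] at hs ⊢
  exact ⟨hs.1, hs.2.trans h⟩

private lemma sum_le_topSum' {ι : Type*} [Fintype ι] (v : ι → ℝ) (s : Finset ι) {k : ℕ}
    (h : s.card ≤ k) : ∑ i ∈ s, v i ≤ topSum v k :=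
  Finset.le_sup' (f := fun t => ∑ i ∈ t, v i) (by simp [h])

private lemma topSum_zero' {ι : Type*} [Fintype ι] (v : ι → ℝ) : topSum v 0 = 0 := by
  apply le_antisymm
  · apply Finset.sup'_le
    intro s hs
    simp only [Finset.mem_filter, Nat.le_zero, Finset.card_eq_zero] at hs
    simp [hs.2]
  · simpa using sum_le_topSum' v ∅ (by simp)

private lemma topSum_total' {ι : Type*} [Fintype ι] (v : ι → ℝ) (hv : ∀ i, 0 ≤ v i) {k : ℕ}
    (h : Fintype.card ι ≤ k) : topSum v k = ∑ i, v i := by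
  apply le_antisymm
  · apply Finset.sup'_le
    intro s _
    exact Finset.sum_le_sum_of_subset_of_nonneg (Finset.subset_univ s) fun i _ _ => hv i
  · exact sum_le_topSum' v Finset.univ (by simpa using h)

private lemma fin_strictMono_le {m d : ℕ} (f : Fin m → Fin d) (hf : StrictMono f) :
    ∀ n (hn : n < m), n ≤ (f ⟨n, hn⟩ : ℕ) := by
  intro n
  induction n with
  | zero => simp
  | succ k ih =>
    intro hn
    have hk : k < m := Nat.lt_of_succ_lt hn
    have h1 : (f ⟨k, hk⟩ : ℕ) < (f ⟨k+1, hn⟩ : ℕ) := hf (by simp [Fin.lt_def])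
    have h2 := ih hk
    omega
    
/-- if the vector `ω^sup` from the supremum construction is already in descending
order, then it is a least upper bound: it is majorized by every nonnegative vector `r` that
majorizes all the `p n`. -/
theorem sup_construction_least_upper_bound {d N dr : ℕ} (hN : 0 < N)
    (p : Fin N → Fin d → ℝ)
    (hnn : ∀ n i, 0 ≤ p n i) (c : ℝ) (hsum : ∀ n, ∑ i, p n i = c)
    (ω : Fin d → ℝ)
    (hω : ∀ k : Fin d, ω k =
      Finset.univ.sup' (Finset.univ_nonempty_iff.mpr ⟨⟨0, hN⟩⟩)
        (fun m => topSum (p m) ((k : ℕ) + 1)) -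
      Finset.univ.sup' (Finset.univ_nonempty_iff.mpr ⟨⟨0, hN⟩⟩)
        (fun m => topSum (p m) (k : ℕ)))
    (hdesc : ∀ k l : Fin d, k ≤ l → ω l ≤ ω k)
    (r : Fin dr → ℝ) (hr : ∀ i, 0 ≤ r i)
    (hmaj : ∀ n, Majorizes (p n) r) :
    Majorizes ω r := by
  classical
  have hne : (Finset.univ : Finset (Fin N)).Nonempty := Finset.univ_nonempty_iff.mpr ⟨⟨0, hN⟩⟩
  set Ω : ℕ → ℝ := fun k => Finset.univ.sup' hne (fun m => topSum (p m) k) with hΩdef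
  have hΩ0 : Ω 0 = 0 := by
    simp [hΩdef, topSum_zero']
  have hΩle : ∀ k, Ω k ≤ topSum r k :=
    fun k => Finset.sup'_le _ _ fun n _ => (hmaj n).1 k
  have hΩmono : ∀ k k', k ≤ k' → Ω k ≤ Ω k' := by
    intro k k' h
    exact Finset.sup'_le _ _ fun n _ =>
      (topSum_mono' (p n) h).trans
        (Finset.le_sup' (f := fun m => topSum (p m) k') (Finset.mem_univ n))
  have hωΩ : ∀ k : Fin d, ω k = Ω ((k : ℕ) + 1) - Ω (k : ℕ) := fun k => hω k
  set ω' : ℕ → ℝ := fun j => if h : j < d then ω ⟨j, h⟩ else 0 with hω'def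
  have htel : ∀ m, m ≤ d → ∑ j ∈ Finset.range m, ω' j = Ω m := by
    intro m
    induction m with
    | zero => intro _; simpa using hΩ0.symm
    | succ k ih =>
      intro hk
      have hkd : k < d := hk
      rw [Finset.sum_range_succ, ih (Nat.le_of_succ_le hk)]
      simp only [hω'def, dif_pos hkd]
      rw [hωΩ ⟨k, hkd⟩]
      ring
  have hsorted : ∀ s : Finset (Fin d), ∑ i ∈ s, ω i ≤ Ω s.card := by
    intro s
    have hcard : s.card ≤ d := by simpa using s.card_le_univ
    set f := s.orderEmbOfFin (k := s.card) rfl with hfdef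
    have himg : s = Finset.image f Finset.univ := by
      apply Finset.coe_injective
      rw [Finset.coe_image, Finset.coe_univ, Set.image_univ, Finset.range_orderEmbOfFin]
    have hsum : ∑ j : Fin s.card, ω (f j) = ∑ i ∈ s, ω i := by
      rw [← Finset.sum_image (fun a _ b _ h => f.injective h), ← himg]
    rw [← hsum, ← htel s.card hcard, ← Fin.sum_univ_eq_sum_range ω']
    apply Finset.sum_le_sum
    intro j _
    have hjd : (j : ℕ) < d := lt_of_lt_of_le j.2 hcard
    have hle : (⟨(j : ℕ), hjd⟩ : Fin d) ≤ f j := by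
      simpa [Fin.le_def] using fin_strictMono_le f f.strictMono (j : ℕ) j.2
    have := hdesc ⟨(j : ℕ), hjd⟩ (f j) hle
    simpa [hω'def, dif_pos hjd] using this
  constructor
  · intro k
    apply Finset.sup'_le
    intro s hs
    simp only [Finset.mem_filter] at hs
    calc ∑ i ∈ s, ω i ≤ Ω s.card := hsorted s
      _ ≤ topSum r s.card := hΩle _
      _ ≤ topSum r k := topSum_mono' r hs.2
  · have h1 : ∑ i, ω i = Ω d := by
      rw [← htel d le_rfl, ← Fin.sum_univ_eq_sum_range ω']
      apply Finset.sum_congr rfl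
      intro i _
      simp [hω'def, i.isLt]
    have hconst : ∀ n : Fin N, topSum (p n) d = c := fun n => by
      rw [topSum_total' (p n) (hnn n) (by simp), hsum n]
    have h2 : Ω d = c := by
      apply le_antisymm
      · exact Finset.sup'_le _ _ fun n _ => (hconst n).le
      · calc c = topSum (p ⟨0, hN⟩) d := (hconst _).symm
          _ ≤ Ω d := Finset.le_sup' (f := fun m => topSum (p m) d) (Finset.mem_univ _)
    have h3 : ∑ j, r j = c := by rw [← (hmaj ⟨0, hN⟩).2, hsum]
    rw [h1, h2, h3]


end
end
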